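/- Fix k ≥ 1. For each pair (i₀, i₁) with 0 ≤ i₀ < i₁ ≤ 2^k, the number of pairs (l, d) with 1 ≤ l ≤ k, 0 ≤ d ≤ 2^{k−l} − 1, such that either (i₀ = d·2^l and i₁ = d·2^l + 2^{l−1}) or (i₀ = d·2^l and i₁ = d·2^l + 2^l), is at most 2. -/

import Mathlib

theorem pair_appears_at_most_twice (k : ℕ) (hk : 1 ≤ k) (i₀ i₁ : ℕ)
    (h01 : i₀ < i₁) (h1 : i₁ ≤ 2 ^ k) :
    ((Finset.Icc 1 k ×ˢ Finset.range (2 ^ k)).filter (fun p =>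
        p.2 ≤ 2 ^ (k - p.1) - 1 ∧
        ((i₀ = p.2 * 2 ^ p.1 ∧ i₁ = p.2 * 2 ^ p.1 + 2 ^ (p.1 - 1)) ∨
         (i₀ = p.2 * 2 ^ p.1 ∧ i₁ = p.2 * 2 ^ p.1 + 2 ^ p.1)))).card ≤ 2 := by
  set m := Nat.log 2 (i₁ - i₀) with hm
  have hsub : ((Finset.Icc 1 k ×ˢ Finset.range (2 ^ k)).filter (fun p =>
        p.2 ≤ 2 ^ (k - p.1) - 1 ∧
        ((i₀ = p.2 * 2 ^ p.1 ∧ i₁ = p.2 * 2 ^ p.1 + 2 ^ (p.1 - 1)) ∨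
         (i₀ = p.2 * 2 ^ p.1 ∧ i₁ = p.2 * 2 ^ p.1 + 2 ^ p.1)))) ⊆
      ({(m + 1, i₀ / 2 ^ (m + 1)), (m, i₀ / 2 ^ m)} : Finset (ℕ × ℕ)) := by
    intro p hp
    simp only [Finset.mem_filter, Finset.mem_product, Finset.mem_Icc,
      Finset.mem_range] at hp
    obtain ⟨⟨⟨hl1, hlk⟩, hd⟩, _, hcase⟩ := hp
    have hpos : 0 < 2 ^ p.1 := Nat.pow_pos (by norm_num)
    rcases hcase with ⟨h0, h1'⟩ | ⟨h0, h1'⟩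
    · have hdiff : i₁ - i₀ = 2 ^ (p.1 - 1) := by omega
      have : m = p.1 - 1 := by rw [hm, hdiff, Nat.log_pow (by norm_num)]
      have hl : p.1 = m + 1 := by omega
      have hd' : p.2 = i₀ / 2 ^ p.1 := by
        rw [h0, Nat.mul_div_cancel _ hpos]
      simp only [Finset.mem_insert, Finset.mem_singleton]
      left
      rw [Prod.ext_iff]
      exact ⟨hl, by rw [hd', hl]⟩
    · have hdiff : i₁ - i₀ = 2 ^ p.1 := by omega
      have hl : m = p.1 := by rw [hm, hdiff, Nat.log_pow (by norm_num)]
      have hd' : p.2 = i₀ / 2 ^ p.1 := by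
        rw [h0, Nat.mul_div_cancel _ hpos]
      simp only [Finset.mem_insert, Finset.mem_singleton]
      right
      rw [Prod.ext_iff]
      exact ⟨hl.symm, by rw [hd', hl]⟩
  calc _ ≤ _ := Finset.card_le_card hsub
    _ ≤ 2 := by
        apply le_trans (Finset.card_insert_le _ _)
        simp
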